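/- Let λ₁λ₂ > 0, Q(u) = (λ₁u₁² + λ₂u₂²)/2, X(u) = (u₁,u₂,Q(u)), and let C₁ ≥ 1, L ≥ 1, N > 2. There exist r₁ > 0, ρ₀ ∈ (0,1], and C_N ≥ 1, depending only on λ₁, λ₂, C₁, L, N, and ‖χ‖_∞, with the following property. Let U ⊂ ℝ² be open with U ⊆ B(0,r₁), set S_Q = X(U) and μ_Q = χ·H²⌊S_Q with χ : ℝ³ → [0,∞) bounded and supported in S_Q. For 0 < ρ ≤ ρ₀ define E^ext_{e₁} := {X(u) : u ∈ U, |n_Q(u)·e₁| ≤ ρ^{1/2}}, with e₁ = (1,0,0). Then for every tube T_ρ of direction e₁, radius C₁ρ, and length parameter L, ∫_{E^ext_{e₁}} (1 + dist(x,T_ρ)/ρ)^{−N} dμ_Q(x) ≤ C_N ρ^{3/2}. -/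

import Mathlib

noncomputable section
open MeasureTheory Metric Set Function
open scoped ENNReal RealInnerProductSpace

abbrev E3 : Type := EuclideanSpace ℝ (Fin 3)
abbrev E2 : Type := EuclideanSpace ℝ (Fin 2)

def mk3 (a b c : ℝ) : E3 := (WithLp.equiv 2 (Fin 3 → ℝ)).symm ![a, b, c]

/-- Quadratic graph parametrization `X(u) = (u₁, u₂, (l₁u₁² + l₂u₂²)/2)`. -/
def Xf (l₁ l₂ : ℝ) (u : E2) : E3 := mk3 (u 0) (u 1) ((l₁ * (u 0) ^ 2 + l₂ * (u 1) ^ 2) / 2)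

/-- Unit normal of the quadratic graph at `X(u)`. -/
def nQ (l₁ l₂ : ℝ) (u : E2) : E3 :=
  (Real.sqrt (1 + l₁ ^ 2 * (u 0) ^ 2 + l₂ ^ 2 * (u 1) ^ 2))⁻¹ •
    mk3 (-(l₁ * u 0)) (-(l₂ * u 1)) 1

/-- The tube `T(v, y₀, s₀, r, L)`. -/
def tube (v y₀ : E3) (s₀ r L : ℝ) : Set E3 :=
  {x | ‖x - ⟪x, v⟫ • v - y₀‖ ≤ r ∧ |⟪x, v⟫ - s₀| ≤ L}

/-- The surface measure `μ_Q = χ·H²⌊S_Q` of the quadratic patch `S_Q = X(U)`. -/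
def muQ (l₁ l₂ : ℝ) (U : Set E2) (χ : E3 → ℝ) : Measure E3 :=
  ((μH[2] : Measure E3).restrict (Xf l₁ l₂ '' U)).withDensity fun x => ENNReal.ofReal (χ x)

def e1 : E3 := mk3 1 0 0

lemma abs_coord_le2 (u : E2) (i : Fin 2) : |u i| ≤ ‖u‖ := by
  rw [EuclideanSpace.norm_eq]
  rw [show |u i| = Real.sqrt (|u i|^2) by rw [Real.sqrt_sq_eq_abs, abs_abs]]
  apply Real.sqrt_le_sqrt
  rw [Fin.sum_univ_two, sq_abs]
  fin_cases i <;> simp <;> nlinarith [sq_nonneg (u 0), sq_nonneg (u 1)]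

lemma abs_coord_le3 (u : E3) (i : Fin 3) : |u i| ≤ ‖u‖ := by
  rw [EuclideanSpace.norm_eq]
  rw [show |u i| = Real.sqrt (|u i|^2) by rw [Real.sqrt_sq_eq_abs, abs_abs]]
  apply Real.sqrt_le_sqrt
  rw [Fin.sum_univ_three, sq_abs]
  fin_cases i <;> simp <;> nlinarith [sq_nonneg (u 0), sq_nonneg (u 1), sq_nonneg (u 2)]

lemma inner_nQ (l₁ l₂ : ℝ) (u : E2) :
    ⟪nQ l₁ l₂ u, e1⟫ = (Real.sqrt (1 + l₁ ^ 2 * (u 0) ^ 2 + l₂ ^ 2 * (u 1) ^ 2))⁻¹ * (-(l₁ * u 0)) := by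
  simp [nQ, e1, mk3, PiLp.inner_apply, Fin.sum_univ_three, PiLp.toLp_apply, WithLp.equiv_symm_apply,
    RCLike.inner_apply]

lemma inner_e1 (y : E3) : ⟪y, e1⟫ = y 0 := by
  simp [e1, mk3, PiLp.inner_apply, Fin.sum_univ_three, PiLp.toLp_apply, WithLp.equiv_symm_apply,
    RCLike.inner_apply]

lemma norm_mk3 (a b c : ℝ) : ‖mk3 a b c‖ = Real.sqrt (a^2+b^2+c^2) := by
  rw [EuclideanSpace.norm_eq]
  simp [mk3, Fin.sum_univ_three, sq_abs, PiLp.toLp_apply, WithLp.equiv_symm_apply]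

lemma le_infDist' {x : E3} {s : Set E3} (hs : s.Nonempty) {b : ℝ}
    (h : ∀ y ∈ s, b ≤ dist x y) : b ≤ infDist x s := by
  rw [Metric.infDist_eq_iInf]
  haveI := hs.to_subtype
  exact le_ciInf fun y => h y y.2

lemma contF (l₁ l₂ : ℝ) : Continuous (fun p : ℝ × ℝ => mk3 p.1 p.2 ((l₁*p.1^2 + l₂*p.2^2)/2)) := by
  unfold mk3
  refine Continuous.comp (PiLp.continuous_toLp 2 (fun _ : Fin 3 => ℝ)) ?_
  refine continuous_pi fun i => ?_
  fin_cases i <;> simp <;> fun_prop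

set_option maxHeartbeats 4000000

lemma one_le_sqrt' {x : ℝ} (h : 1 ≤ x) : 1 ≤ Real.sqrt x := by
  rw [show (1:ℝ) = Real.sqrt 1 by simp]
  exact Real.sqrt_le_sqrt h

/-- extreme mass with tubular tails,
`∫_{E^ext} (1 + dist(x,T_ρ)/ρ)^{−N} dμ_Q ≤ C_N ρ^{3/2}`. -/
theorem extreme_mass_with_tails (l₁ l₂ C₁ L N Mχ : ℝ) (hl : 0 < l₁ * l₂)
    (hC₁ : 1 ≤ C₁) (hL : 1 ≤ L) (hN : 2 < N) (hMχ : 0 ≤ Mχ) :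
    ∃ r₁ : ℝ, 0 < r₁ ∧ ∃ ρ₀ ∈ Set.Ioc (0 : ℝ) 1, ∃ CN : ℝ, 1 ≤ CN ∧
      ∀ U : Set E2, IsOpen U → U ⊆ Metric.ball (0 : E2) r₁ →
      ∀ χ : E3 → ℝ, (∀ x, 0 ≤ χ x) → (∀ x, χ x ≤ Mχ) →
        Function.support χ ⊆ Xf l₁ l₂ '' U →
        ∀ ρ : ℝ, 0 < ρ → ρ ≤ ρ₀ →
        ∀ y₀ : E3, ⟪y₀, e1⟫ = 0 → ∀ s₀ : ℝ,
          (∫⁻ x in Xf l₁ l₂ '' {u : E2 | u ∈ U ∧ |⟪nQ l₁ l₂ u, e1⟫| ≤ Real.sqrt ρ},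
              ENNReal.ofReal
                ((1 + infDist x (tube e1 y₀ s₀ (C₁ * ρ) L) / ρ) ^ (-N))
              ∂(muQ l₁ l₂ U χ)) ≤
            ENNReal.ofReal (CN * ρ ^ ((3 : ℝ) / 2)) := by
  have hl₁ : l₁ ≠ 0 := by rintro rfl; simp at hl
  have hal₁ : 0 < |l₁| := abs_pos.2 hl₁
  set M : ℝ := Real.sqrt (1 + l₁^2 + l₂^2) with hM_def
  have hM1 : 1 ≤ M := one_le_sqrt' (by nlinarith only [sq_nonneg l₁, sq_nonneg l₂])
  set c : ℝ := M / |l₁| with hc_def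
  have hc : 0 < c := div_pos (by linarith only [hM1]) hal₁
  set B : ℝ := 1 + c with hB_def
  have hB1 : (1:ℝ) ≤ B := by rw [hB_def]; linarith only [hc]
  have hcB : c ≤ B := by rw [hB_def]; linarith only []
  set K : ℝ := Real.sqrt 2 + B * (|l₁| + |l₂|) with hK_def
  have hK0 : 0 ≤ K := by
    have h1 : (0:ℝ) ≤ Real.sqrt 2 := Real.sqrt_nonneg 2
    have h2 : 0 ≤ B * (|l₁| + |l₂|) := by positivity
    rw [hK_def]; linarith only [h1, h2]
  have hsummable : Summable (fun k : ℕ => ((1:ℝ) + k) ^ (-N)) := by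
    have h1 : Summable (fun n : ℕ => (n:ℝ) ^ (-N)) :=
      Real.summable_nat_rpow.2 (by linarith only [hN])
    have h2 := h1.comp_injective (Nat.succ_injective)
    refine h2.congr fun k => ?_
    simp only [Function.comp]
    push_cast
    ring_nf
  set S : ℝ := ∑' k : ℕ, ((1:ℝ) + k) ^ (-N) with hS_def
  have hS0 : 0 ≤ S := tsum_nonneg fun k => Real.rpow_nonneg (by positivity) _
  set P : ℝ := (1 + 2*C₁) ^ N with hP_def
  have hP0 : 0 ≤ P := Real.rpow_nonneg (by linarith only [hC₁]) _
  set CN : ℝ := max 1 (Mχ * (P * S) * (K^2 * (4*c))) with hCN_def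
  refine ⟨1, one_pos, 1, ⟨one_pos, le_refl 1⟩, CN, le_max_left _ _, ?_⟩
  intro U hUopen hUball χ hχ0 hχM hχsupp ρ hρ hρ1 y₀ hy₀ s₀
  set T : Set E3 := tube e1 y₀ s₀ (C₁ * ρ) L with hT_def
  set a : ℝ := y₀ 1 with ha_def
  set F : ℝ × ℝ → E3 := fun p => mk3 p.1 p.2 ((l₁*p.1^2 + l₂*p.2^2)/2) with hF_def
  set J : ℕ → Set ℝ := fun k =>
    {t : ℝ | (k:ℝ)*ρ ≤ |t - a| ∧ |t - a| ≤ ((k:ℝ)+1)*ρ} ∩ Icc (-1:ℝ) 1 with hJ_def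
  set R : ℕ → Set (ℝ × ℝ) := fun k =>
    (Icc (-(c*Real.sqrt ρ)) (c*Real.sqrt ρ)) ×ˢ J k with hR_def
  set sk : ℕ → Set E3 := fun k => F '' R k with hsk_def
  have hsqρ : Real.sqrt ρ ≤ 1 := by
    rw [show (1:ℝ) = Real.sqrt 1 by simp]
    exact Real.sqrt_le_sqrt hρ1
  have hsqρ0 : 0 < Real.sqrt ρ := Real.sqrt_pos.2 hρ
  -- tube nonempty
  have he1self : ⟪e1, e1⟫ = (1:ℝ) := by
    rw [inner_e1]; rfl
  have hTne : T.Nonempty := by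
    have he1' : ⟪y₀ + s₀ • e1, e1⟫ = s₀ := by
      rw [inner_add_left, real_inner_smul_left, hy₀, he1self]; ring
    refine ⟨y₀ + s₀ • e1, ?_, ?_⟩
    · show ‖y₀ + s₀ • e1 - ⟪y₀ + s₀ • e1, e1⟫ • e1 - y₀‖ ≤ C₁ * ρ
      rw [he1']
      have hz : y₀ + s₀ • e1 - s₀ • e1 - y₀ = 0 := by abel
      rw [hz, norm_zero]
      exact le_of_lt (mul_pos (lt_of_lt_of_le one_pos hC₁) hρ)
    · show |⟪y₀ + s₀ • e1, e1⟫ - s₀| ≤ L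
      rw [he1', sub_self, abs_zero]
      linarith only [hL]
  -- measure comparison: muQ ≤ Mχ • μH
  have hmu : muQ l₁ l₂ U χ ≤ (ENNReal.ofReal Mχ) • (μH[2] : Measure E3) := by
    refine le_trans (withDensity_mono (Filter.Eventually.of_forall fun x =>
      ENNReal.ofReal_le_ofReal (hχM x))) ?_
    rw [withDensity_const]
    intro t
    simp only [Measure.smul_apply, smul_eq_mul]
    exact mul_le_mul_right (Measure.restrict_le_self t) _
  -- subset of the union of the pieces
  have hsub : Xf l₁ l₂ '' {u : E2 | u ∈ U ∧ |⟪nQ l₁ l₂ u, e1⟫| ≤ Real.sqrt ρ} ⊆ ⋃ k, sk k := by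
    rintro x ⟨u, ⟨huU, hucond⟩, rfl⟩
    have hu_norm : ‖u‖ < 1 := by
      have := hUball huU
      rwa [mem_ball, dist_zero_right] at this
    have h0 : |u 0| ≤ 1 := le_of_lt (lt_of_le_of_lt (abs_coord_le2 u 0) hu_norm)
    have h1 : |u 1| ≤ 1 := le_of_lt (lt_of_le_of_lt (abs_coord_le2 u 1) hu_norm)
    have e0 : (u 0)^2 ≤ 1 := by nlinarith only [sq_abs (u 0), abs_nonneg (u 0), h0]
    have e1' : (u 1)^2 ≤ 1 := by nlinarith only [sq_abs (u 1), abs_nonneg (u 1), h1]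
    have hs'1 : (1:ℝ) ≤ Real.sqrt (1 + l₁ ^ 2 * (u 0) ^ 2 + l₂ ^ 2 * (u 1) ^ 2) := by
      apply one_le_sqrt'
      nlinarith only [sq_nonneg (l₁ * u 0), sq_nonneg (l₂ * u 1)]
    have hs'M : Real.sqrt (1 + l₁ ^ 2 * (u 0) ^ 2 + l₂ ^ 2 * (u 1) ^ 2) ≤ M := by
      apply Real.sqrt_le_sqrt
      have t1 := mul_le_mul_of_nonneg_left e0 (sq_nonneg l₁)
      have t2 := mul_le_mul_of_nonneg_left e1' (sq_nonneg l₂)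
      rw [mul_one] at t1 t2
      linarith only [t1, t2]
    have hu0 : |u 0| ≤ c * Real.sqrt ρ := by
      rw [inner_nQ] at hucond
      have hs'pos : 0 < Real.sqrt (1 + l₁ ^ 2 * (u 0) ^ 2 + l₂ ^ 2 * (u 1) ^ 2) := by linarith only [hs'1]
      rw [abs_mul, abs_inv, abs_neg, abs_mul, abs_of_pos hs'pos] at hucond
      have h2 : |l₁| * |u 0| ≤ Real.sqrt ρ * Real.sqrt (1 + l₁ ^ 2 * (u 0) ^ 2 + l₂ ^ 2 * (u 1) ^ 2) := by
        rw [inv_mul_le_iff₀ hs'pos] at hucond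
        linarith only [hucond]
      have h3 : |l₁| * |u 0| ≤ Real.sqrt ρ * M := by
        have := mul_le_mul_of_nonneg_left hs'M (Real.sqrt_nonneg ρ)
        linarith only [h2, this]
      rw [hc_def, div_mul_eq_mul_div, le_div_iff₀ hal₁]
      linarith only [h3]
    set k : ℕ := ⌊|u 1 - a| / ρ⌋₊ with hk_def
    refine mem_iUnion.2 ⟨k, (u 0, u 1), ⟨?_, ?_⟩, rfl⟩
    · constructor
      · linarith only [neg_abs_le (u 0), hu0]
      · linarith only [le_abs_self (u 0), hu0]
    · refine ⟨⟨?_, ?_⟩, ?_, ?_⟩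
      · have hfl := Nat.floor_le (div_nonneg (abs_nonneg (u 1 - a)) hρ.le)
        rw [← hk_def] at hfl
        calc (k:ℝ) * ρ ≤ (|u 1 - a| / ρ) * ρ := mul_le_mul_of_nonneg_right hfl hρ.le
        _ = |u 1 - a| := div_mul_cancel₀ _ hρ.ne'
      · have hfl := (Nat.lt_floor_add_one (|u 1 - a| / ρ)).le
        rw [← hk_def] at hfl
        calc |u 1 - a| = (|u 1 - a| / ρ) * ρ := (div_mul_cancel₀ _ hρ.ne').symm
        _ ≤ ((k:ℝ) + 1) * ρ := mul_le_mul_of_nonneg_right hfl hρ.le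
      · linarith only [neg_abs_le (u 1), h1]
      · linarith only [le_abs_self (u 1), h1]
  -- pointwise bound for the integrand on each piece
  have hgbound : ∀ k : ℕ, ∀ x ∈ sk k,
      ENNReal.ofReal ((1 + infDist x T / ρ) ^ (-N)) ≤
        ENNReal.ofReal (P * ((1:ℝ)+k)^(-N)) := by
    intro k x hx
    obtain ⟨p, hp, rfl⟩ := hx
    have hpJ := hp.2
    have hdk : max ((k:ℝ) - C₁) 0 * ρ ≤ infDist (F p) T := by
      rcases le_total ((k:ℝ) - C₁) 0 with h | h
      · rw [max_eq_right h, zero_mul]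
        exact infDist_nonneg
      · rw [max_eq_left h]
        refine le_infDist' hTne fun y hy => ?_
        have hy1 : |y 1 - a| ≤ C₁ * ρ := by
          have h5 := hy.1
          have h6 : |(y - ⟪y, e1⟫ • e1 - y₀) 1| ≤ ‖y - ⟪y, e1⟫ • e1 - y₀‖ :=
            abs_coord_le3 _ 1
          have h7 : (y - ⟪y, e1⟫ • e1 - y₀) 1 = y 1 - a := by
            have he11 : e1 1 = 0 := rfl
            have : (y - ⟪y, e1⟫ • e1 - y₀) 1 = y 1 - ⟪y, e1⟫ * e1 1 - y₀ 1 := rfl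
            rw [this, he11, ha_def]
            ring
          rw [h7] at h6
          exact le_trans h6 h5
        have h8 : |(F p) 1 - y 1| ≤ ‖F p - y‖ := by
          have h8' := abs_coord_le3 (F p - y) 1
          have : (F p - y) 1 = (F p) 1 - y 1 := rfl
          rwa [this] at h8'
        have hx1 : (F p) 1 = p.2 := rfl
        rw [dist_eq_norm]
        have h9 : (k:ℝ)*ρ - C₁ * ρ ≤ |p.2 - y 1| := by
          have h10 : (k:ℝ)*ρ ≤ |p.2 - a| := hpJ.1.1
          have h11 := abs_sub_abs_le_abs_sub (p.2 - a) (y 1 - a)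
          have h12 : (p.2 - a) - (y 1 - a) = p.2 - y 1 := by ring
          rw [h12] at h11
          linarith only [h10, h11, hy1]
        rw [hx1] at h8
        calc ((k:ℝ) - C₁) * ρ = (k:ℝ)*ρ - C₁ * ρ := by ring
        _ ≤ |p.2 - y 1| := h9
        _ ≤ ‖F p - y‖ := h8
    have hA1 : (1:ℝ) ≤ 1 + max ((k:ℝ) - C₁) 0 := by
      have := le_max_right ((k:ℝ) - C₁) 0
      linarith only [this]
    have hdiv : 1 + max ((k:ℝ) - C₁) 0 ≤ 1 + infDist (F p) T / ρ := by
      have : max ((k:ℝ) - C₁) 0 ≤ infDist (F p) T / ρ := by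
        rw [le_div_iff₀ hρ]
        exact hdk
      linarith only [this]
    have hstep1 : (1 + infDist (F p) T / ρ) ^ (-N) ≤ (1 + max ((k:ℝ) - C₁) 0) ^ (-N) :=
      Real.rpow_le_rpow_of_nonpos (by linarith only [hA1]) hdiv (by linarith only [hN])
    have hstep2 : (1 + max ((k:ℝ) - C₁) 0) ^ (-N) ≤ P * ((1:ℝ)+k)^(-N) := by
      have hA0 : (0:ℝ) < 1 + max ((k:ℝ) - C₁) 0 := by linarith only [hA1]
      have hk0 : (0:ℝ) < 1 + k := by positivity
      have hkey : (1:ℝ) + k ≤ (1 + 2*C₁) * (1 + max ((k:ℝ) - C₁) 0) := by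
        rcases le_total ((k:ℝ) - C₁) 0 with h | h
        · rw [max_eq_right h]
          linarith only [h, hC₁]
        · rw [max_eq_left h]
          nlinarith only [h, hC₁, mul_nonneg (le_trans zero_le_one hC₁) h]
      have hinv : (1 + max ((k:ℝ) - C₁) 0)⁻¹ ≤ (1 + 2*C₁) * ((1:ℝ)+k)⁻¹ := by
        rw [inv_le_iff_one_le_mul₀ hA0]
        rw [mul_comm (1 + 2*C₁) ((1:ℝ)+k)⁻¹, mul_assoc]
        calc (1:ℝ) = ((1:ℝ)+k) * ((1:ℝ)+k)⁻¹ := (mul_inv_cancel₀ hk0.ne').symm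
        _ ≤ (((1:ℝ)+2*C₁) * (1 + max ((k:ℝ) - C₁) 0)) * ((1:ℝ)+k)⁻¹ := by
            apply mul_le_mul_of_nonneg_right hkey (inv_nonneg.2 hk0.le)
        _ = ((1:ℝ)+k)⁻¹ * (((1:ℝ)+2*C₁) * (1 + max ((k:ℝ) - C₁) 0)) := by ring
      have hrw1 : (1 + max ((k:ℝ) - C₁) 0) ^ (-N) = ((1 + max ((k:ℝ) - C₁) 0)⁻¹) ^ N := by
        rw [Real.rpow_neg hA0.le, ← Real.inv_rpow hA0.le]
      have hrw2 : ((1:ℝ)+k) ^ (-N) = (((1:ℝ)+k)⁻¹) ^ N := by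
        rw [Real.rpow_neg hk0.le, ← Real.inv_rpow hk0.le]
      rw [hrw1, hrw2, hP_def]
      calc ((1 + max ((k:ℝ) - C₁) 0)⁻¹) ^ N ≤ ((1 + 2*C₁) * ((1:ℝ)+k)⁻¹) ^ N :=
            Real.rpow_le_rpow (inv_nonneg.2 hA0.le) hinv (by linarith only [hN])
      _ = (1 + 2*C₁) ^ N * (((1:ℝ)+k)⁻¹) ^ N :=
            Real.mul_rpow (by linarith only [hC₁]) (inv_nonneg.2 hk0.le)
    calc ENNReal.ofReal ((1 + infDist (F p) T / ρ) ^ (-N))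
        ≤ ENNReal.ofReal ((1 + max ((k:ℝ) - C₁) 0) ^ (-N)) := ENNReal.ofReal_le_ofReal hstep1
    _ ≤ ENNReal.ofReal (P * ((1:ℝ)+k)^(-N)) := ENNReal.ofReal_le_ofReal hstep2
  -- measurability of the pieces
  have hJcompact : ∀ k, IsCompact (J k) := by
    intro k
    refine IsCompact.inter_left isCompact_Icc ?_
    have : {t : ℝ | (k:ℝ)*ρ ≤ |t - a| ∧ |t - a| ≤ ((k:ℝ)+1)*ρ} =
        {t : ℝ | (k:ℝ)*ρ ≤ |t - a|} ∩ {t : ℝ | |t - a| ≤ ((k:ℝ)+1)*ρ} := rfl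
    rw [this]
    exact (isClosed_le continuous_const ((continuous_id.sub continuous_const).abs)).inter
      (isClosed_le ((continuous_id.sub continuous_const).abs) continuous_const)
  have hskmeas : ∀ k, MeasurableSet (sk k) := by
    intro k
    have hRc : IsCompact (R k) := isCompact_Icc.prod (hJcompact k)
    exact (hRc.image (contF l₁ l₂)).measurableSet
  -- Hausdorff measure bound for each piece
  have hRsubbox : ∀ k, R k ⊆ (Icc (-B) B) ×ˢ (Icc (-B) B) := by
    intro k
    rintro ⟨x, y⟩ ⟨hx, hy⟩
    have hx' : -(c*Real.sqrt ρ) ≤ x ∧ x ≤ c*Real.sqrt ρ := hx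
    have hy' := hy.2
    have hcs : c * Real.sqrt ρ ≤ B := by
      have h' : c * Real.sqrt ρ ≤ c * 1 := mul_le_mul_of_nonneg_left hsqρ hc.le
      rw [mul_one] at h'
      linarith only [h', hcB]
    constructor
    · constructor
      · linarith only [hx'.1, hcs]
      · linarith only [hx'.2, hcs]
    · constructor
      · linarith only [hy'.1, hB1]
      · linarith only [hy'.2, hB1]
  have hlip : LipschitzOnWith K.toNNReal F ((Icc (-B) B) ×ˢ (Icc (-B) B)) := by
    rw [lipschitzOnWith_iff_dist_le_mul]
    intro p hp q hq
    have hKcoe : (K.toNNReal : ℝ) = K := Real.coe_toNNReal K hK0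
    have hp1 : |p.1| ≤ B := abs_le.2 ⟨hp.1.1, hp.1.2⟩
    have hp2 : |p.2| ≤ B := abs_le.2 ⟨hp.2.1, hp.2.2⟩
    have hq1 : |q.1| ≤ B := abs_le.2 ⟨hq.1.1, hq.1.2⟩
    have hq2 : |q.2| ≤ B := abs_le.2 ⟨hq.2.1, hq.2.2⟩
    have hd1 : |p.1 - q.1| ≤ dist p q := by
      rw [Prod.dist_eq, ← Real.dist_eq]
      exact le_max_left _ _
    have hd2 : |p.2 - q.2| ≤ dist p q := by
      rw [Prod.dist_eq, ← Real.dist_eq]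
      exact le_max_right _ _
    have hD0 : (0:ℝ) ≤ dist p q := dist_nonneg
    have hFsub : F p - F q = mk3 (p.1 - q.1) (p.2 - q.2)
        ((l₁*p.1^2 + l₂*p.2^2)/2 - (l₁*q.1^2 + l₂*q.2^2)/2) := by
      ext i; fin_cases i <;> rfl
    rw [dist_eq_norm, hFsub, norm_mk3, hKcoe]
    set z : ℝ := (l₁*p.1^2 + l₂*p.2^2)/2 - (l₁*q.1^2 + l₂*q.2^2)/2 with hz_def
    have hzbound : |z| ≤ B * (|l₁| + |l₂|) * dist p q := by
      have hz2 : z = l₁*((p.1+q.1)*(p.1-q.1))/2 + l₂*((p.2+q.2)*(p.2-q.2))/2 := by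
        rw [hz_def]; ring
      rw [hz2]
      have t1 : |l₁*((p.1+q.1)*(p.1-q.1))/2| ≤ |l₁| * B * dist p q := by
        rw [abs_div, abs_mul, abs_mul, abs_two]
        have hs1 : |p.1+q.1| ≤ 2*B := le_trans (abs_add_le _ _) (by linarith only [hp1, hq1])
        have : |p.1+q.1| * |p.1-q.1| ≤ (2*B) * dist p q := by
          apply mul_le_mul hs1 hd1 (abs_nonneg _) (by positivity)
        calc |l₁| * (|p.1+q.1| * |p.1-q.1|) / 2 ≤ |l₁| * ((2*B) * dist p q) / 2 := by
              apply div_le_div_of_nonneg_right ?_ (by norm_num)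
              · exact mul_le_mul_of_nonneg_left this (abs_nonneg l₁)
        _ = |l₁| * B * dist p q := by ring
      have t2 : |l₂*((p.2+q.2)*(p.2-q.2))/2| ≤ |l₂| * B * dist p q := by
        rw [abs_div, abs_mul, abs_mul, abs_two]
        have hs2 : |p.2+q.2| ≤ 2*B := le_trans (abs_add_le _ _) (by linarith only [hp2, hq2])
        have : |p.2+q.2| * |p.2-q.2| ≤ (2*B) * dist p q := by
          apply mul_le_mul hs2 hd2 (abs_nonneg _) (by positivity)
        calc |l₂| * (|p.2+q.2| * |p.2-q.2|) / 2 ≤ |l₂| * ((2*B) * dist p q) / 2 := by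
              apply div_le_div_of_nonneg_right ?_ (by norm_num)
              · exact mul_le_mul_of_nonneg_left this (abs_nonneg l₂)
        _ = |l₂| * B * dist p q := by ring
      calc |l₁*((p.1+q.1)*(p.1-q.1))/2 + l₂*((p.2+q.2)*(p.2-q.2))/2|
          ≤ |l₁*((p.1+q.1)*(p.1-q.1))/2| + |l₂*((p.2+q.2)*(p.2-q.2))/2| := abs_add_le _ _
      _ ≤ |l₁| * B * dist p q + |l₂| * B * dist p q := by linarith only [t1, t2]
      _ = B * (|l₁| + |l₂|) * dist p q := by ring
    have hsq2 : (Real.sqrt 2)^2 = 2 := Real.sq_sqrt (by norm_num)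
    have hbig : (p.1-q.1)^2 + (p.2-q.2)^2 + z^2 ≤
        (Real.sqrt 2 * dist p q + |z|)^2 := by
      have e1 : (p.1-q.1)^2 ≤ (dist p q)^2 := by
        nlinarith only [abs_nonneg (p.1-q.1), sq_abs (p.1-q.1), hd1]
      have e2 : (p.2-q.2)^2 ≤ (dist p q)^2 := by
        nlinarith only [abs_nonneg (p.2-q.2), sq_abs (p.2-q.2), hd2]
      have hc2 : (Real.sqrt 2)^2 * (dist p q)^2 = 2 * (dist p q)^2 := by rw [hsq2]
      nlinarith only [e1, e2, hc2, sq_abs z,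
        mul_nonneg (mul_nonneg (Real.sqrt_nonneg 2) hD0) (abs_nonneg z)]
    calc Real.sqrt ((p.1-q.1)^2 + (p.2-q.2)^2 + z^2)
        ≤ Real.sqrt ((Real.sqrt 2 * dist p q + |z|)^2) := Real.sqrt_le_sqrt hbig
    _ = Real.sqrt 2 * dist p q + |z| := by
        rw [Real.sqrt_sq (by positivity)]
    _ ≤ Real.sqrt 2 * dist p q + B * (|l₁| + |l₂|) * dist p q := by linarith only [hzbound]
    _ = K * dist p q := by rw [hK_def]; ring
  have hρ32 : ρ ^ ((3:ℝ)/2) = Real.sqrt ρ * ρ := by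
    rw [show (3:ℝ)/2 = 1/2 + 1 by norm_num, Real.rpow_add hρ, Real.rpow_one,
      Real.sqrt_eq_rpow]
  have hmeasure_sk : ∀ k, (μH[2] : Measure E3) (sk k) ≤
      ENNReal.ofReal (K^2 * (4*c*ρ^((3:ℝ)/2))) := by
    intro k
    have himg := (hlip.mono (hRsubbox k)).hausdorffMeasure_image_le (by norm_num : (0:ℝ) ≤ 2)
    refine le_trans himg ?_
    have hvol : (μH[2] : Measure (ℝ × ℝ)) (R k) ≤ ENNReal.ofReal (2*(c*Real.sqrt ρ)) *
        ENNReal.ofReal (2*ρ) := by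
      rw [MeasureTheory.hausdorffMeasure_prod_real]
      have hsubJ : J k ⊆ Icc (a-((k:ℝ)+1)*ρ) (a-(k:ℝ)*ρ) ∪ Icc (a+(k:ℝ)*ρ) (a+((k:ℝ)+1)*ρ) := by
        intro t ht
        obtain ⟨⟨ht1, ht2⟩, _⟩ := ht
        rcases le_total t a with h | h
        · left
          rw [abs_of_nonpos (by linarith only [h])] at ht1 ht2
          constructor
          · linarith only [ht2]
          · linarith only [ht1]
        · right
          rw [abs_of_nonneg (by linarith only [h])] at ht1 ht2
          constructor
          · linarith only [ht1]
          · linarith only [ht2]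
      calc volume (R k) ≤ volume ((Icc (-(c*Real.sqrt ρ)) (c*Real.sqrt ρ)) ×ˢ
            (Icc (a-((k:ℝ)+1)*ρ) (a-(k:ℝ)*ρ) ∪ Icc (a+(k:ℝ)*ρ) (a+((k:ℝ)+1)*ρ))) := by
            apply measure_mono
            exact Set.prod_mono subset_rfl hsubJ
      _ = volume (Icc (-(c*Real.sqrt ρ)) (c*Real.sqrt ρ)) *
            volume (Icc (a-((k:ℝ)+1)*ρ) (a-(k:ℝ)*ρ) ∪ Icc (a+(k:ℝ)*ρ) (a+((k:ℝ)+1)*ρ)) := by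
            rw [Measure.volume_eq_prod, Measure.prod_prod]
      _ ≤ ENNReal.ofReal (2*(c*Real.sqrt ρ)) * ENNReal.ofReal (2*ρ) := by
            apply mul_le_mul'
            · rw [Real.volume_Icc]
              apply ENNReal.ofReal_le_ofReal
              ring_nf
              linarith only []
            · refine le_trans (measure_union_le _ _) ?_
              rw [Real.volume_Icc, Real.volume_Icc]
              rw [show a-(k:ℝ)*ρ - (a-((k:ℝ)+1)*ρ) = ρ by ring,
                show a+((k:ℝ)+1)*ρ - (a+(k:ℝ)*ρ) = ρ by ring]
              rw [← ENNReal.ofReal_add hρ.le hρ.le]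
              apply ENNReal.ofReal_le_ofReal
              linarith only []
    have hcoe : ((K.toNNReal : ℝ≥0∞)) ^ (2:ℝ) = ENNReal.ofReal (K^2) := by
      rw [show ((K.toNNReal : ℝ≥0∞)) = ENNReal.ofReal K from rfl]
      rw [ENNReal.ofReal_rpow_of_nonneg hK0 (by norm_num)]
      congr 1
      rw [show (2:ℝ) = ((2:ℕ):ℝ) by norm_num, Real.rpow_natCast]
    calc (K.toNNReal : ℝ≥0∞) ^ (2:ℝ) * (μH[2] : Measure (ℝ × ℝ)) (R k)
        ≤ ENNReal.ofReal (K^2) * (ENNReal.ofReal (2*(c*Real.sqrt ρ)) * ENNReal.ofReal (2*ρ)) := by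
          rw [hcoe]
          exact mul_le_mul_right hvol _
    _ = ENNReal.ofReal (K^2 * (4*c*ρ^((3:ℝ)/2))) := by
          rw [← ENNReal.ofReal_mul (by positivity), ← ENNReal.ofReal_mul (by positivity)]
          congr 1
          rw [hρ32]
          ring
  -- per-piece integral bound
  have hperk : ∀ k : ℕ, (∫⁻ x in sk k, ENNReal.ofReal ((1 + infDist x T / ρ) ^ (-N)) ∂(μH[2] : Measure E3)) ≤
      ENNReal.ofReal (P * ((1:ℝ)+k)^(-N)) * ENNReal.ofReal (K^2 * (4*c*ρ^((3:ℝ)/2))) := by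
    intro k
    calc (∫⁻ x in sk k, ENNReal.ofReal ((1 + infDist x T / ρ) ^ (-N)) ∂(μH[2] : Measure E3))
        ≤ ∫⁻ _x in sk k, ENNReal.ofReal (P * ((1:ℝ)+k)^(-N)) ∂(μH[2] : Measure E3) :=
          lintegral_mono_ae (ae_restrict_of_forall_mem (hskmeas k) (hgbound k))
    _ = ENNReal.ofReal (P * ((1:ℝ)+k)^(-N)) * (μH[2] : Measure E3) (sk k) :=
          setLIntegral_const _ _
    _ ≤ ENNReal.ofReal (P * ((1:ℝ)+k)^(-N)) * ENNReal.ofReal (K^2 * (4*c*ρ^((3:ℝ)/2))) :=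
          mul_le_mul_right (hmeasure_sk k) _
  -- assembly
  calc (∫⁻ x in Xf l₁ l₂ '' {u : E2 | u ∈ U ∧ |⟪nQ l₁ l₂ u, e1⟫| ≤ Real.sqrt ρ},
          ENNReal.ofReal ((1 + infDist x T / ρ) ^ (-N)) ∂(muQ l₁ l₂ U χ))
      ≤ ∫⁻ x in Xf l₁ l₂ '' {u : E2 | u ∈ U ∧ |⟪nQ l₁ l₂ u, e1⟫| ≤ Real.sqrt ρ},
          ENNReal.ofReal ((1 + infDist x T / ρ) ^ (-N)) ∂((ENNReal.ofReal Mχ) • (μH[2] : Measure E3)) :=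
        lintegral_mono' (Measure.restrict_mono subset_rfl hmu) le_rfl
  _ = ENNReal.ofReal Mχ * ∫⁻ x in Xf l₁ l₂ '' {u : E2 | u ∈ U ∧ |⟪nQ l₁ l₂ u, e1⟫| ≤ Real.sqrt ρ},
          ENNReal.ofReal ((1 + infDist x T / ρ) ^ (-N)) ∂(μH[2] : Measure E3) := by
        rw [Measure.restrict_smul, lintegral_smul_measure, smul_eq_mul]
  _ ≤ ENNReal.ofReal Mχ * ∫⁻ x in ⋃ k, sk k,
          ENNReal.ofReal ((1 + infDist x T / ρ) ^ (-N)) ∂(μH[2] : Measure E3) :=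
        mul_le_mul_right (lintegral_mono' (Measure.restrict_mono hsub le_rfl) le_rfl) _
  _ ≤ ENNReal.ofReal Mχ * ∑' k : ℕ, (∫⁻ x in sk k,
          ENNReal.ofReal ((1 + infDist x T / ρ) ^ (-N)) ∂(μH[2] : Measure E3)) :=
        mul_le_mul_right (lintegral_iUnion_le _ _) _
  _ ≤ ENNReal.ofReal Mχ * ∑' k : ℕ, (ENNReal.ofReal (P * ((1:ℝ)+k)^(-N)) *
          ENNReal.ofReal (K^2 * (4*c*ρ^((3:ℝ)/2)))) :=
        mul_le_mul_right (ENNReal.tsum_le_tsum hperk) _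
  _ = ENNReal.ofReal Mχ * (ENNReal.ofReal (P * S) * ENNReal.ofReal (K^2 * (4*c*ρ^((3:ℝ)/2)))) := by
        rw [ENNReal.tsum_mul_right]
        congr 2
        rw [← ENNReal.ofReal_tsum_of_nonneg (fun k => mul_nonneg hP0
          (Real.rpow_nonneg (by positivity) _)) (hsummable.mul_left P)]
        congr 1
        rw [hS_def, ← tsum_mul_left]
  _ ≤ ENNReal.ofReal (CN * ρ ^ ((3:ℝ)/2)) := by
        rw [← ENNReal.ofReal_mul (mul_nonneg hP0 hS0),
          ← ENNReal.ofReal_mul hMχ]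
        apply ENNReal.ofReal_le_ofReal
        have hρp : (0:ℝ) ≤ ρ ^ ((3:ℝ)/2) := Real.rpow_nonneg hρ.le _
        calc Mχ * (P * S * (K^2 * (4*c*ρ^((3:ℝ)/2))))
            = (Mχ * (P * S) * (K^2 * (4*c))) * ρ^((3:ℝ)/2) := by ring
        _ ≤ CN * ρ^((3:ℝ)/2) := mul_le_mul_of_nonneg_right (le_max_right _ _) hρp
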